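/- Probabilistic upper bound on k-tuplets: let ℓ = |Σ| > k ≥ 2, and suppose α ∈ (0, 1/k) satisfies ℓ^{−(k−1)α} · α^{−kα} · (1 − kα)^{kα − 1} < 1. Then for all sufficiently large n there exists a word S of length n over Σ such that S does not contain k pairwise disjoint identical scattered subwords each of length ⌈αn⌉; i.e., f(n, k, Σ) < αn. -/

import Mathlib

/-- The scattered subword of `S` indexed by the set `I`, taken in increasing order. -/
def extract {α : Type*} (S : List α) (I : Finset ℕ) : List α :=
  (I.sort (· ≤ ·)).filterMap (fun i => S[i]?)

/-- `S` has `k` pairwise disjoint identical scattered subwords of length `ℓ` each. -/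
def HasKTuplets {α : Type*} (S : List α) (k ℓ : ℕ) : Prop :=
  ∃ I : Fin k → Finset ℕ, (∀ j, I j ⊆ Finset.range S.length) ∧
    (∀ j j', j ≠ j' → Disjoint (I j) (I j')) ∧ (∀ j, (I j).card = ℓ) ∧
    (∀ j j', extract S (I j) = extract S (I j'))

set_option maxHeartbeats 1000000

section Aux
open Real Filter

def Wfin (m k : ℕ) (T : Finset ℕ) : Finset (Fin k → Finset ℕ) :=
  (Fintype.piFinset (fun _ : Fin k => T.powerset)).filter
    (fun I => (∀ j j', j ≠ j' → Disjoint (I j) (I j')) ∧ ∀ j, (I j).card = m)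

lemma mem_Wfin {m k : ℕ} {T : Finset ℕ} {I : Fin k → Finset ℕ} :
    I ∈ Wfin m k T ↔ (∀ j, I j ⊆ T) ∧ (∀ j j', j ≠ j' → Disjoint (I j) (I j')) ∧
      ∀ j, (I j).card = m := by
  simp [Wfin, Fintype.mem_piFinset, and_assoc]

lemma card_Wfin (m : ℕ) : ∀ (k : ℕ) (T : Finset ℕ),
    (Wfin m k T).card ≤ ∏ j ∈ Finset.range k, Nat.choose (T.card - j*m) m := by
  intro k
  induction k with
  | zero => intro T; simp [Wfin]
  | succ k ih =>
    intro T
    have key : (Wfin m (k+1) T).card ≤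
        ((T.powersetCard m).sigma (fun A => Wfin m k (T \ A))).card := by
      apply Finset.card_le_card_of_injOn (fun I => ⟨I 0, Fin.tail I⟩)
      · intro I hI
        rw [Finset.mem_coe, mem_Wfin] at hI
        obtain ⟨hsub, hdisj, hcard⟩ := hI
        rw [Finset.mem_coe, Finset.mem_sigma]
        constructor
        · rw [Finset.mem_powersetCard]; exact ⟨hsub 0, hcard 0⟩
        · rw [mem_Wfin]
          refine ⟨fun j => ?_, fun j j' hjj' => ?_, fun j => hcard _⟩
          · rw [Finset.subset_sdiff]
            exact ⟨hsub _, (hdisj _ _ (by simp [Fin.ext_iff])).symm⟩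
          · exact hdisj _ _ (by simpa [Fin.ext_iff] using hjj')
      · intro I _ J _ h
        simp only [Sigma.mk.inj_iff] at h
        obtain ⟨h0, ht⟩ := h
        have ht' : Fin.tail I = Fin.tail J := eq_of_heq ht
        funext x
        refine Fin.cases ?_ ?_ x
        · exact h0
        · intro i; exact congrFun ht' i
    refine key.trans ?_
    rw [Finset.card_sigma]
    calc ∑ A ∈ T.powersetCard m, (Wfin m k (T \ A)).card
        ≤ ∑ A ∈ T.powersetCard m, ∏ j ∈ Finset.range k, Nat.choose ((T.card - m) - j*m) m := by
          apply Finset.sum_le_sum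
          intro A hA
          rw [Finset.mem_powersetCard] at hA
          calc (Wfin m k (T \ A)).card
              ≤ ∏ j ∈ Finset.range k, Nat.choose ((T \ A).card - j*m) m := ih (T \ A)
            _ = _ := by rw [Finset.card_sdiff_of_subset hA.1, hA.2]
      _ = ∏ j ∈ Finset.range (k+1), Nat.choose (T.card - j*m) m := by
          rw [Finset.sum_const, Finset.card_powersetCard, Finset.prod_range_succ',
            smul_eq_mul, Nat.mul_comm]
          congr 1
          · apply Finset.prod_congr rfl; intro j _; congr 1; rw [Nat.add_mul, one_mul]; omega
          · simp

lemma filterMap_eq_of_isSome {γ δ : Type*} :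
    ∀ (L : List γ) (p q : γ → Option δ), (∀ i ∈ L, (p i).isSome) → (∀ i ∈ L, (q i).isSome) →
    L.filterMap p = L.filterMap q → ∀ i ∈ L, p i = q i := by
  intro L
  induction L with
  | nil => intro p q _ _ _ i hi; simp at hi
  | cons a L ih =>
    intro p q hp hq h i hi
    obtain ⟨x, hx⟩ := Option.isSome_iff_exists.mp (hp a (by simp))
    obtain ⟨y, hy⟩ := Option.isSome_iff_exists.mp (hq a (by simp))
    simp only [List.filterMap_cons, hx, hy, List.cons.injEq] at h
    rcases List.mem_cons.mp hi with h1 | h1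
    · subst h1; rw [hx, hy, h.1]
    · exact ih p q (fun i hi => hp i (by simp [hi])) (fun i hi => hq i (by simp [hi])) h.2 i h1

lemma getElem?_ofFn_lt {γ : Type*} {n : ℕ} (f : Fin n → γ) {i : ℕ} (h : i < n) :
    (List.ofFn f)[i]? = some (f ⟨i, h⟩) := by
  simp [List.getElem?_ofFn, List.ofFnNthVal, h]

lemma fiber_card (n ℓ k m : ℕ) (hk : 0 < k) (I : Fin k → Finset ℕ)
    (hsub : ∀ j, I j ⊆ Finset.range n)
    (hdisj : ∀ j j', j ≠ j' → Disjoint (I j) (I j'))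
    (hcard : ∀ j, (I j).card = m) :
    (Finset.univ.filter (fun f : Fin n → Fin ℓ =>
      ∀ j j', extract (List.ofFn f) (I j) = extract (List.ofFn f) (I j'))).card
    ≤ ℓ ^ (n - (k-1)*m) := by
  classical
  set j0 : Fin k := ⟨0, hk⟩ with hj0
  set U : Finset ℕ := (Finset.univ.erase j0).biUnion I with hU
  have hUsub : U ⊆ Finset.range n := by
    intro i hi
    rw [hU, Finset.mem_biUnion] at hi
    obtain ⟨j, _, hij⟩ := hi
    exact hsub j hij
  have hUcard : U.card = (k-1)*m := by
    rw [hU, Finset.card_biUnion]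
    · rw [Finset.sum_congr rfl (fun j _ => hcard j), Finset.sum_const, smul_eq_mul,
        Finset.card_erase_of_mem (Finset.mem_univ _), Finset.card_univ, Fintype.card_fin]
    · intro j hj j' hj' hne
      exact hdisj j j' hne
  -- the restriction map
  have key : (Finset.univ.filter (fun f : Fin n → Fin ℓ =>
      ∀ j j', extract (List.ofFn f) (I j) = extract (List.ofFn f) (I j'))).card
      ≤ (Finset.univ : Finset (↑(Finset.range n \ U) → Fin ℓ)).card := by
    apply Finset.card_le_card_of_injOn
      (fun f => fun x => f ⟨x.1, Finset.mem_range.mp (Finset.mem_sdiff.mp x.2).1⟩)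
    · intro f _; exact Finset.mem_univ _
    · intro f hf g hg hfg
      rw [Finset.mem_coe, Finset.mem_filter] at hf hg
      -- agreement outside U
      have hout : ∀ i : Fin n, (i : ℕ) ∉ U → f i = g i := by
        intro i hiU
        have hmem : (i : ℕ) ∈ Finset.range n \ U :=
          Finset.mem_sdiff.mpr ⟨Finset.mem_range.mpr i.2, hiU⟩
        have := congrFun hfg (⟨(i : ℕ), hmem⟩ : ↑(Finset.range n \ U))
        simpa [Fin.eta] using this
      -- I j0 is disjoint from U
      have hj0U : ∀ i ∈ I j0, i ∉ U := by
        intro i hi hiU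
        rw [hU, Finset.mem_biUnion] at hiU
        obtain ⟨j, hj, hij⟩ := hiU
        have hne : j ≠ j0 := Finset.ne_of_mem_erase hj
        exact (Finset.disjoint_left.mp (hdisj j j0 hne)) hij hi
      -- extracts at j0 agree
      have hx0 : extract (List.ofFn f) (I j0) = extract (List.ofFn g) (I j0) := by
        apply List.filterMap_congr
        intro i hi
        rw [Finset.mem_sort] at hi
        have hin : i < n := Finset.mem_range.mp (hsub j0 hi)
        rw [getElem?_ofFn_lt f hin, getElem?_ofFn_lt g hin,
          hout ⟨i, hin⟩ (hj0U i hi)]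
      -- extracts agree everywhere
      have hx : ∀ j, extract (List.ofFn f) (I j) = extract (List.ofFn g) (I j) := by
        intro j
        calc extract (List.ofFn f) (I j) = extract (List.ofFn f) (I j0) := hf.2 j j0
          _ = extract (List.ofFn g) (I j0) := hx0
          _ = extract (List.ofFn g) (I j) := hg.2 j0 j
      funext i
      by_cases hiU : (i : ℕ) ∈ U
      · rw [hU, Finset.mem_biUnion] at hiU
        obtain ⟨j, _, hij⟩ := hiU
        have hsome : ∀ (h : Fin n → Fin ℓ), ∀ x ∈ (I j).sort (· ≤ ·),
            ((List.ofFn h)[x]?).isSome := by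
          intro h x hx
          rw [Finset.mem_sort] at hx
          have := Finset.mem_range.mp (hsub j hx)
          rw [getElem?_ofFn_lt h this]; rfl
        have := filterMap_eq_of_isSome ((I j).sort (· ≤ ·)) _ _
          (hsome f) (hsome g) (hx j) (i : ℕ) ((Finset.mem_sort _).mpr hij)
        have hin : (i : ℕ) < n := Finset.mem_range.mp (hsub j hij)
        rw [getElem?_ofFn_lt f hin, getElem?_ofFn_lt g hin] at this
        simpa [Fin.eta] using Option.some.inj this
      · exact hout i hiU
  rw [Finset.card_univ, Fintype.card_fun, Fintype.card_coe, Fintype.card_fin,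
    Finset.card_sdiff_of_subset hUsub, Finset.card_range, hUcard] at key
  exact key

open scoped Classical in
lemma count_bad (n ℓ k m : ℕ) (hk : 0 < k) :
    (Finset.univ.filter (fun f : Fin n → Fin ℓ => HasKTuplets (List.ofFn f) k m)).card
    ≤ (Wfin m k (Finset.range n)).card * ℓ ^ (n - (k-1)*m) := by
  classical
  have hsub : (Finset.univ.filter (fun f : Fin n → Fin ℓ => HasKTuplets (List.ofFn f) k m))
      ⊆ (Wfin m k (Finset.range n)).biUnion (fun I =>
        Finset.univ.filter (fun f : Fin n → Fin ℓ =>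
          ∀ j j', extract (List.ofFn f) (I j) = extract (List.ofFn f) (I j'))) := by
    intro f hf
    rw [Finset.mem_filter] at hf
    obtain ⟨-, I, hIsub, hIdisj, hIcard, hIext⟩ := hf
    rw [List.length_ofFn] at hIsub
    rw [Finset.mem_biUnion]
    exact ⟨I, mem_Wfin.mpr ⟨hIsub, hIdisj, hIcard⟩, Finset.mem_filter.mpr ⟨Finset.mem_univ _, hIext⟩⟩
  calc _ ≤ _ := Finset.card_le_card hsub
    _ ≤ ∑ I ∈ Wfin m k (Finset.range n),
        (Finset.univ.filter (fun f : Fin n → Fin ℓ =>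
          ∀ j j', extract (List.ofFn f) (I j) = extract (List.ofFn f) (I j'))).card :=
      Finset.card_biUnion_le
    _ ≤ ∑ I ∈ Wfin m k (Finset.range n), ℓ ^ (n - (k-1)*m) := by
        apply Finset.sum_le_sum
        intro I hI
        rw [mem_Wfin] at hI
        exact fiber_card n ℓ k m hk I hI.1 hI.2.1 hI.2.2
    _ = _ := by rw [Finset.sum_const, smul_eq_mul]

open scoped Classical in
lemma exists_good (n ℓ k m : ℕ) (hk : 0 < k)
    (hlt : (Wfin m k (Finset.range n)).card * ℓ ^ (n - (k-1)*m) < ℓ ^ n) :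
    ∃ S : List (Fin ℓ), S.length = n ∧ ¬ HasKTuplets S k m := by
  classical
  by_contra h
  push_neg at h
  have hall : ∀ f : Fin n → Fin ℓ, HasKTuplets (List.ofFn f) k m := by
    intro f
    exact h (List.ofFn f) (List.length_ofFn (f := f))
  have : (Finset.univ.filter (fun f : Fin n → Fin ℓ => HasKTuplets (List.ofFn f) k m))
      = Finset.univ := by
    apply Finset.filter_true_of_mem; intro f _; exact hall f
  have hcard := count_bad n ℓ k m hk
  rw [this, Finset.card_univ, Fintype.card_fun, Fintype.card_fin, Fintype.card_fin] at hcard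
  omega

lemma factorial_upper (n : ℕ) (hn : 1 ≤ n) :
    (n.factorial : ℝ) ≤ exp 1 * Real.sqrt n * ((n : ℝ) / exp 1) ^ n := by
  have h1 : Stirling.stirlingSeq n ≤ Stirling.stirlingSeq 1 := by
    obtain ⟨p, rfl⟩ := Nat.exists_eq_add_of_le' hn
    exact Stirling.stirlingSeq'_antitone (Nat.zero_le p)
  rw [Stirling.stirlingSeq_one] at h1
  have h2 : (0:ℝ) < Real.sqrt (2 * n) * ((n : ℝ) / exp 1) ^ n := by
    have : (0:ℝ) < (n:ℝ) := by exact_mod_cast hn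
    positivity
  have h3 : (n.factorial : ℝ) = Stirling.stirlingSeq n * (Real.sqrt (2 * n) * ((n : ℝ) / exp 1) ^ n) := by
    rw [Stirling.stirlingSeq]; field_simp
  rw [h3]
  calc Stirling.stirlingSeq n * (Real.sqrt (2 * n) * ((n : ℝ) / exp 1) ^ n)
      ≤ (exp 1 / Real.sqrt 2) * (Real.sqrt (2 * n) * ((n : ℝ) / exp 1) ^ n) := by
        apply mul_le_mul_of_nonneg_right h1 h2.le
    _ = exp 1 * Real.sqrt n * ((n : ℝ) / exp 1) ^ n := by
        rw [show (2:ℝ) * n = 2 * n by ring, Real.sqrt_mul (by norm_num : (0:ℝ) ≤ 2)]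
        have : Real.sqrt 2 ≠ 0 := by positivity
        field_simp

lemma factorial_lower (n : ℕ) : ((n : ℝ) / exp 1) ^ n ≤ (n.factorial : ℝ) := by
  cases n with
  | zero => simp
  | succ p =>
    have h1 : Real.sqrt π ≤ Stirling.stirlingSeq (p + 1) :=
      Stirling.stirlingSeq'_antitone.le_of_tendsto
        ((Stirling.tendsto_stirlingSeq_sqrt_pi).comp (Filter.tendsto_add_atTop_nat 1)) p
    have hπ : (1:ℝ) ≤ Real.sqrt π := by
      rw [show (1:ℝ) = Real.sqrt 1 by simp]
      exact Real.sqrt_le_sqrt (by linarith [Real.pi_gt_three])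
    have h2 : (1:ℝ) ≤ Real.sqrt (2 * (p+1 : ℕ)) := by
      rw [show (1:ℝ) = Real.sqrt 1 by simp]
      apply Real.sqrt_le_sqrt
      have : (1:ℝ) ≤ (p+1 : ℕ) := by exact_mod_cast Nat.succ_le_succ (Nat.zero_le p)
      linarith
    have h3 : ((Nat.factorial (p+1) : ℕ) : ℝ) = Stirling.stirlingSeq (p+1) *
        (Real.sqrt (2 * (p+1 : ℕ)) * (((p+1 : ℕ) : ℝ) / exp 1) ^ (p+1)) := by
      rw [Stirling.stirlingSeq]; field_simp
    have hpow : (0:ℝ) ≤ (((p+1:ℕ) : ℝ) / exp 1) ^ (p+1) :=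
      pow_nonneg (div_nonneg (Nat.cast_nonneg _) (exp_pos 1).le) _
    rw [h3]
    nlinarith [mul_le_mul_of_nonneg_right (mul_le_mul (le_trans hπ h1) h2 (by norm_num)
      (Stirling.stirlingSeq'_pos p).le) hpow]

lemma prod_choose_eq (m : ℕ) (hm : 0 < m) : ∀ (k n : ℕ), k * m ≤ n →
    ∏ j ∈ Finset.range k, (((n - j*m).choose m : ℕ) : ℝ)
      = (n.factorial : ℝ) / ((m.factorial : ℝ)^k * ((n - k*m).factorial : ℝ)) := by
  intro k
  induction k with
  | zero =>
    intro n _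
    have p2 : (0:ℝ) < (n.factorial : ℝ) := by exact_mod_cast Nat.factorial_pos _
    simp [div_self p2.ne']
  | succ k ih =>
    intro n hn
    have hk : k * m ≤ n := le_trans (Nat.mul_le_mul_right m (Nat.le_succ k)) hn
    have hm' : m ≤ n - k * m := by
      have : (k+1) * m = k*m + m := by ring
      omega
    rw [Finset.prod_range_succ, ih n hk, Nat.cast_choose ℝ hm']
    have e1 : n - k*m - m = n - (k+1)*m := by
      have : (k+1) * m = k*m + m := by ring
      omega
    rw [e1]
    have p1 : (0:ℝ) < (m.factorial : ℝ) := by exact_mod_cast Nat.factorial_pos m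
    have p2 : (0:ℝ) < ((n - k*m).factorial : ℝ) := by exact_mod_cast Nat.factorial_pos _
    have p3 : (0:ℝ) < ((n - (k+1)*m).factorial : ℝ) := by exact_mod_cast Nat.factorial_pos _
    field_simp
    ring

lemma factorial_upper' (n : ℕ) (hn : 0 < n) :
    (n.factorial : ℝ) ≤ exp 1 * Real.sqrt n * ((n : ℝ) / exp 1) ^ n :=
  factorial_upper n hn

lemma factorial_lower' (n : ℕ) : ((n : ℝ) / exp 1) ^ n ≤ (n.factorial : ℝ) :=
  factorial_lower n

lemma choose_prod_lt (ℓ k n m : ℕ) (hℓ : 0 < ℓ) (hk : 1 ≤ k) (hm : 0 < m) (hkm : k*m < n)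
    (hlog : 1 + Real.log n / 2 + (n:ℝ) * Real.log n
      < ((k*m : ℕ):ℝ) * Real.log m + ((n - k*m : ℕ):ℝ) * Real.log ((n - k*m : ℕ):ℝ)
        + (((k-1)*m : ℕ):ℝ) * Real.log ℓ) :
    ∏ j ∈ Finset.range k, (n - j*m).choose m < ℓ^((k-1)*m) := by
  set N : ℕ := n - k*m with hNdef
  have hNpos : 0 < N := by omega
  have hn : 0 < n := by omega
  have hnR : (0:ℝ) < n := by exact_mod_cast hn
  have hmR : (0:ℝ) < m := by exact_mod_cast hm
  have hNR : (0:ℝ) < N := by exact_mod_cast hNpos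
  have hℓR : (0:ℝ) < ℓ := by exact_mod_cast hℓ
  set A : ℕ := (k-1)*m with hA
  -- key strict inequality
  have hLpos : (0:ℝ) < exp 1 * Real.sqrt n * ((n:ℝ)/exp 1)^n := by positivity
  have hRpos : (0:ℝ) < (((m:ℝ)/exp 1)^m)^k * (((N:ℝ)/exp 1)^N) * (ℓ:ℝ)^A := by positivity
  have key : exp 1 * Real.sqrt n * ((n:ℝ)/exp 1)^n
      < (((m:ℝ)/exp 1)^m)^k * (((N:ℝ)/exp 1)^N) * (ℓ:ℝ)^A := by
    rw [← Real.exp_log hLpos, ← Real.exp_log hRpos, Real.exp_lt_exp]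
    rw [Real.log_mul (by positivity) (by positivity), Real.log_mul (by positivity) (by positivity),
      Real.log_sqrt hnR.le, Real.log_pow, Real.log_div hnR.ne' (exp_ne_zero 1),
      Real.log_exp]
    rw [Real.log_mul (by positivity) (by positivity), Real.log_mul (by positivity) (by positivity),
      Real.log_pow, Real.log_pow, Real.log_pow, Real.log_pow,
      Real.log_div hmR.ne' (exp_ne_zero 1), Real.log_div hNR.ne' (exp_ne_zero 1), Real.log_exp]
    have hcast1 : ((k*m : ℕ):ℝ) = (k:ℝ) * m := by push_cast; ring
    have hcast3 : (N:ℝ) = (n:ℝ) - (k:ℝ)*m := by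
      rw [hNdef]; push_cast [Nat.cast_sub hkm.le]; ring
    rw [hcast1] at hlog
    ring_nf at hlog ⊢
    linarith [hlog, hcast3]
  -- factorial comparisons
  have hfu := factorial_upper' n hn
  have hfm := factorial_lower' m
  have hfN := factorial_lower' N
  have hfmk : (((m:ℝ)/exp 1)^m)^k ≤ ((m.factorial : ℝ))^k :=
    pow_le_pow_left₀ (by positivity) hfm k
  have hmain : (n.factorial : ℝ) < ((m.factorial:ℝ))^k * ((N.factorial:ℝ)) * (ℓ:ℝ)^A := by
    calc (n.factorial : ℝ) ≤ _ := hfu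
      _ < (((m:ℝ)/exp 1)^m)^k * (((N:ℝ)/exp 1)^N) * (ℓ:ℝ)^A := key
      _ ≤ ((m.factorial:ℝ))^k * ((N.factorial:ℝ)) * (ℓ:ℝ)^A := by
          apply mul_le_mul_of_nonneg_right _ (by positivity)
          apply mul_le_mul hfmk hfN (by positivity) (by positivity)
  have hprod := prod_choose_eq m hm k n hkm.le
  have hcast : (((∏ j ∈ Finset.range k, (n - j*m).choose m : ℕ)) : ℝ)
      = (n.factorial : ℝ) / ((m.factorial : ℝ)^k * ((N.factorial : ℝ))) := by
    push_cast
    rw [hprod]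
  have hdenpos : (0:ℝ) < (m.factorial : ℝ)^k * ((N.factorial : ℝ)) := by
    have p1 : (0:ℝ) < (m.factorial : ℝ) := by exact_mod_cast Nat.factorial_pos m
    have p2 : (0:ℝ) < (N.factorial : ℝ) := by exact_mod_cast Nat.factorial_pos N
    positivity
  have final : (((∏ j ∈ Finset.range k, (n - j*m).choose m : ℕ)) : ℝ) < ((ℓ^A : ℕ) : ℝ) := by
    rw [hcast, div_lt_iff₀ hdenpos]
    push_cast
    nlinarith [hmain]
  exact_mod_cast final

noncomputable def phi (k ℓ : ℕ) (β : ℝ) : ℝ :=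
  k*β*Real.log β + (1-k*β)*Real.log (1-k*β) + ((k:ℝ)-1)*β*Real.log ℓ

lemma phi_pos (ℓ k : ℕ) (hℓ : 0 < ℓ) (α : ℝ) (h0 : 0 < α) (hkα : (k:ℝ)*α < 1)
    (hmain : (ℓ : ℝ) ^ (-((k : ℝ) - 1) * α) * α ^ (-(k : ℝ) * α) *
      (1 - (k : ℝ) * α) ^ ((k : ℝ) * α - 1) < 1) : 0 < phi k ℓ α := by
  have hℓR : (0:ℝ) < ℓ := by exact_mod_cast hℓ
  have h1k : (0:ℝ) < 1 - k*α := by linarith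
  have p1 : (0:ℝ) < (ℓ:ℝ) ^ (-((k : ℝ) - 1) * α) := Real.rpow_pos_of_pos hℓR _
  have p2 : (0:ℝ) < α ^ (-(k : ℝ) * α) := Real.rpow_pos_of_pos h0 _
  have p3 : (0:ℝ) < (1 - (k:ℝ)*α) ^ ((k : ℝ) * α - 1) := Real.rpow_pos_of_pos h1k _
  have hP : (0:ℝ) < (ℓ : ℝ) ^ (-((k : ℝ) - 1) * α) * α ^ (-(k : ℝ) * α) *
      (1 - (k : ℝ) * α) ^ ((k : ℝ) * α - 1) := by positivity
  have hlog := Real.log_neg hP hmain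
  rw [Real.log_mul (by positivity) p3.ne', Real.log_mul p1.ne' p2.ne',
    Real.log_rpow hℓR, Real.log_rpow h0, Real.log_rpow h1k] at hlog
  unfold phi
  nlinarith [hlog]

lemma phi_cont (k ℓ : ℕ) (α : ℝ) (h0 : 0 < α) (hkα : (k:ℝ)*α < 1) :
    ContinuousAt (phi k ℓ) α := by
  have h1 : ContinuousAt (fun β : ℝ => (k:ℝ)*β*Real.log β) α :=
    (continuousAt_const.mul continuousAt_id).mul (Real.continuousAt_log h0.ne')
  have hg : ContinuousAt (fun β : ℝ => 1 - (k:ℝ)*β) α :=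
    (continuousAt_const.sub (continuousAt_const.mul continuousAt_id))
  have h2 : ContinuousAt (fun β : ℝ => (1-(k:ℝ)*β)*Real.log (1-(k:ℝ)*β)) α := by
    apply hg.mul
    have hlc : ContinuousAt Real.log (1 - (k:ℝ)*α) := Real.continuousAt_log (by linarith)
    exact ContinuousAt.comp (g := Real.log) (f := fun β => 1 - (k:ℝ)*β) hlc hg
  have h3 : ContinuousAt (fun β : ℝ => ((k:ℝ)-1)*β*Real.log ℓ) α :=
    ((continuousAt_const.mul continuousAt_id).mul continuousAt_const)
  exact (h1.add h2).add h3

lemma rhs_eq (k ℓ n m : ℕ) (hn : 0 < n) (hm : 0 < m) (hk : 1 ≤ k) (hkm : k*m < n) :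
    ((k*m : ℕ):ℝ) * Real.log m + ((n - k*m : ℕ):ℝ) * Real.log ((n - k*m : ℕ):ℝ)
      + (((k-1)*m : ℕ):ℝ) * Real.log ℓ
    = (n:ℝ)*Real.log n + (n:ℝ) * phi k ℓ ((m:ℝ)/(n:ℝ)) := by
  have hnR : (0:ℝ) < n := by exact_mod_cast hn
  have hmR : (0:ℝ) < m := by exact_mod_cast hm
  set β : ℝ := (m:ℝ)/(n:ℝ) with hβ
  have hβpos : 0 < β := by positivity
  have hmn : (m:ℝ) = (n:ℝ) * β := by rw [hβ]; field_simp
  have hNR : ((n - k*m : ℕ):ℝ) = (n:ℝ) - (k:ℝ)*(m:ℝ) := by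
    push_cast [Nat.cast_sub hkm.le]; ring
  have h1kβ : 1 - (k:ℝ)*β = ((n:ℝ) - (k:ℝ)*m)/(n:ℝ) := by
    rw [hβ]; field_simp
  have hNpos : (0:ℝ) < (n:ℝ) - (k:ℝ)*m := by
    have : ((k*m:ℕ):ℝ) < (n:ℝ) := by exact_mod_cast hkm
    push_cast at this; linarith
  have h1kβpos : 0 < 1 - (k:ℝ)*β := by rw [h1kβ]; positivity
  have hNeq : (n:ℝ) - (k:ℝ)*m = (n:ℝ) * (1 - (k:ℝ)*β) := by rw [h1kβ]; field_simp
  have hlogm : Real.log m = Real.log n + Real.log β := by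
    rw [hmn, Real.log_mul hnR.ne' hβpos.ne']
  have hlogN : Real.log ((n - k*m : ℕ):ℝ) = Real.log n + Real.log (1-(k:ℝ)*β) := by
    rw [hNR, hNeq, Real.log_mul hnR.ne' h1kβpos.ne']
  rw [hlogm, hlogN, hNR]
  push_cast [Nat.cast_sub hk]
  unfold phi
  rw [hmn]
  ring

end Aux

open Real Filter in
/-- Probabilistic upper bound on `k`-tuplets: if `ℓ = |Σ| > k ≥ 2` and
`α ∈ (0, 1/k)` satisfies `ℓ^{-(k-1)α} · α^{-kα} · (1-kα)^{kα-1} < 1`, then for all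
sufficiently large `n` there is a word of length `n` over `Σ` without `k` pairwise
disjoint identical scattered subwords of length `⌈αn⌉` each. -/
theorem no_large_ktuplets (ℓ k : ℕ) (hk : 2 ≤ k) (hℓ : k < ℓ)
    (α : ℝ) (h0 : 0 < α) (h1 : α < 1 / (k : ℝ))
    (hmain : (ℓ : ℝ) ^ (-((k : ℝ) - 1) * α) * α ^ (-(k : ℝ) * α) *
      (1 - (k : ℝ) * α) ^ ((k : ℝ) * α - 1) < 1) :
    ∃ N : ℕ, ∀ n : ℕ, N ≤ n →
      ∃ S : List (Fin ℓ), S.length = n ∧ ¬ HasKTuplets S k ⌈α * (n : ℝ)⌉₊ := by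
  have hkR : (0:ℝ) < k := by positivity
  have hkα : (k:ℝ)*α < 1 := by
    rw [lt_div_iff₀ hkR] at h1
    linarith
  have hℓpos : 0 < ℓ := by omega
  set c := phi k ℓ α with hcdef
  have hcpos : 0 < c := phi_pos ℓ k hℓpos α h0 hkα hmain
  have h1kα : (0:ℝ) < 1 - k*α := by linarith
  -- tendsto of the ratio
  have hlow : ∀ᶠ n : ℕ in atTop, α ≤ (⌈α*(n:ℝ)⌉₊ : ℝ)/(n:ℝ) := by
    rw [eventually_atTop]
    refine ⟨1, fun n hn => ?_⟩
    have hnR : (0:ℝ) < n := by exact_mod_cast hn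
    rw [le_div_iff₀ hnR]
    calc α * n ≤ ⌈α*(n:ℝ)⌉₊ := Nat.le_ceil _
      _ = _ := by ring_nf
  have hup : ∀ᶠ n : ℕ in atTop, (⌈α*(n:ℝ)⌉₊ : ℝ)/(n:ℝ) ≤ α + 1/(n:ℝ) := by
    rw [eventually_atTop]
    refine ⟨1, fun n hn => ?_⟩
    have hnR : (0:ℝ) < n := by exact_mod_cast hn
    rw [div_le_iff₀ hnR]
    have hceil : (⌈α*(n:ℝ)⌉₊ : ℝ) < α*n + 1 := Nat.ceil_lt_add_one (by positivity)
    have : (α + 1/(n:ℝ))*n = α*n + 1 := by field_simp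
    linarith
  have hupt : Tendsto (fun n : ℕ => α + 1/(n:ℝ)) atTop (nhds α) := by
    have h := (tendsto_one_div_atTop_nhds_zero_nat).const_add α
    simpa using h
  have htend : Tendsto (fun n : ℕ => (⌈α*(n:ℝ)⌉₊ : ℝ)/(n:ℝ)) atTop (nhds α) :=
    tendsto_of_tendsto_of_tendsto_of_le_of_le' tendsto_const_nhds hupt hlow hup
  have hphi : Tendsto (fun n : ℕ => phi k ℓ ((⌈α*(n:ℝ)⌉₊ : ℝ)/(n:ℝ))) atTop (nhds c) :=
    (phi_cont k ℓ α h0 hkα).tendsto.comp htend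
  have E1 : ∀ᶠ n : ℕ in atTop, c/2 < phi k ℓ ((⌈α*(n:ℝ)⌉₊ : ℝ)/(n:ℝ)) :=
    hphi.eventually (eventually_gt_nhds (by linarith))
  have E2 : ∀ᶠ n : ℕ in atTop, 1 + Real.log n / 2 < (n:ℝ) * (c/2) := by
    rw [eventually_atTop]
    refine ⟨⌈(2/(c/2))^2⌉₊ + 1, fun n hn => ?_⟩
    have hnR : (1:ℝ) ≤ n := by exact_mod_cast Nat.one_le_iff_ne_zero.mpr (by omega)
    have hsq : 2/(c/2) < Real.sqrt n := by
      rw [show (2/(c/2)) = Real.sqrt ((2/(c/2))^2) from (Real.sqrt_sq (by positivity)).symm]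
      apply Real.sqrt_lt_sqrt (by positivity)
      calc (2/(c/2))^2 ≤ (⌈(2/(c/2))^2⌉₊ : ℝ) := Nat.le_ceil _
        _ < n := by exact_mod_cast Nat.lt_of_succ_le hn
    have hs : 0 < Real.sqrt n := by
      have : (0:ℝ) < n := by linarith
      positivity
    have hlogn : Real.log n ≤ 2*(Real.sqrt n - 1) := by
      have he : Real.log n = 2 * Real.log (Real.sqrt n) := by
        rw [Real.log_sqrt (by linarith)]; ring
      have := Real.log_le_sub_one_of_pos hs
      rw [he]; linarith
    have hnn : (n:ℝ) = Real.sqrt n * Real.sqrt n := (Real.mul_self_sqrt (by linarith)).symm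
    have hc2 : (0:ℝ) < c/2 := by linarith
    have h2lt : 2 < Real.sqrt n * (c/2) := by
      have h := mul_lt_mul_of_pos_right hsq hc2
      rwa [div_mul_cancel₀ _ hc2.ne'] at h
    have hs1 : (1:ℝ) ≤ Real.sqrt n := by
      rw [show (1:ℝ) = Real.sqrt 1 by simp]
      exact Real.sqrt_le_sqrt hnR
    have h3lt : 2 * Real.sqrt n < (n:ℝ) * (c/2) := by
      calc 2 * Real.sqrt n < Real.sqrt n * (c/2) * Real.sqrt n :=
            mul_lt_mul_of_pos_right h2lt hs
        _ = (Real.sqrt n * Real.sqrt n) * (c/2) := by ring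
        _ = (n:ℝ) * (c/2) := by rw [← hnn]
    linarith [hlogn, hs1]
  have E3 : ∀ᶠ n : ℕ in atTop, k*⌈α*(n:ℝ)⌉₊ < n := by
    rw [eventually_atTop]
    refine ⟨⌈((k:ℝ)+1)/(1-k*α)⌉₊ + 1, fun n hn => ?_⟩
    have h1 : ((k:ℝ)+1)/(1-k*α) ≤ n := by
      calc ((k:ℝ)+1)/(1-k*α) ≤ (⌈((k:ℝ)+1)/(1-k*α)⌉₊ : ℝ) := Nat.le_ceil _
        _ ≤ n := by exact_mod_cast Nat.le_of_succ_le hn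
    have h2 : (k:ℝ)+1 ≤ n*(1-k*α) := (div_le_iff₀ h1kα).mp h1
    have hceil : (⌈α*(n:ℝ)⌉₊ : ℝ) < α*n + 1 := Nat.ceil_lt_add_one (by positivity)
    have h3 : ((k*⌈α*(n:ℝ)⌉₊ : ℕ):ℝ) < (n:ℝ) := by
      push_cast
      nlinarith [hceil, hkR]
    exact_mod_cast h3
  have E4 : ∀ᶠ n : ℕ in atTop, 0 < ⌈α*(n:ℝ)⌉₊ := by
    rw [eventually_atTop]
    refine ⟨1, fun n hn => ?_⟩
    have hnR : (0:ℝ) < n := by exact_mod_cast hn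
    exact Nat.ceil_pos.mpr (by positivity)
  have big : ∀ᶠ n : ℕ in atTop,
      ∃ S : List (Fin ℓ), S.length = n ∧ ¬ HasKTuplets S k ⌈α * (n : ℝ)⌉₊ := by
    filter_upwards [E1, E2, E3, E4] with n h1' h2' h3' h4'
    set m : ℕ := ⌈α * (n:ℝ)⌉₊ with hm
    have hn0 : 0 < n := by
      rcases Nat.eq_zero_or_pos n with h | h
      · exfalso; rw [h] at h3'; omega
      · exact h
    have hnR : (0:ℝ) ≤ n := by positivity
    -- the log inequality
    have hlog : 1 + Real.log n / 2 + (n:ℝ) * Real.log n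
        < ((k*m : ℕ):ℝ) * Real.log m + ((n - k*m : ℕ):ℝ) * Real.log ((n - k*m : ℕ):ℝ)
          + (((k-1)*m : ℕ):ℝ) * Real.log ℓ := by
      rw [rhs_eq k ℓ n m hn0 h4' (by omega) h3']
      have : (n:ℝ) * (c/2) ≤ (n:ℝ) * phi k ℓ ((m:ℝ)/(n:ℝ)) :=
        mul_le_mul_of_nonneg_left (le_of_lt h1') hnR
      linarith
    have hchoose := choose_prod_lt ℓ k n m hℓpos (by omega) h4' h3' hlog
    have hW := card_Wfin m k (Finset.range n)
    rw [Finset.card_range] at hW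
    have hk1m : (k-1)*m ≤ k*m := Nat.mul_le_mul_right m (Nat.sub_le k 1)
    have hlt : (Wfin m k (Finset.range n)).card * ℓ ^ (n - (k-1)*m) < ℓ ^ n := by
      calc (Wfin m k (Finset.range n)).card * ℓ ^ (n - (k-1)*m)
          ≤ (∏ j ∈ Finset.range k, Nat.choose (n - j*m) m) * ℓ ^ (n - (k-1)*m) :=
            Nat.mul_le_mul_right _ hW
        _ < ℓ^((k-1)*m) * ℓ ^ (n - (k-1)*m) := by
            exact (Nat.mul_lt_mul_right (by positivity : 0 < ℓ ^ (n - (k-1)*m))).mpr hchoose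
        _ = ℓ^n := by rw [← pow_add]; congr 1; omega
    exact exists_good n ℓ k m (by omega) hlt
  exact eventually_atTop.mp big
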